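/- arXiv:math/0207085 — 2 statements merged into one kernel-verified Lean document; each statement's English description precedes it below -/
import Mathlib

section
/- For every integer D ≥ 1, the identity ∑_{n≥0} c_n(D) t^n = (1−t)^{−D} · (1−t²)^{−D(D−1)/2} holds in the formal power series ring ℚ[[t]], where c_n(D) is the number of pairs (λ, T) with λ a Young diagram with n cells and T a semistandard Young tableau of shape λ with entries in {0, 1, …, D−1}. -/
open PowerSeries

/-- `ssytPairCount D n` is the number of pairs `(λ, T)` where `λ` is a Young diagram with `n`
cells and `T` is a semistandard Young tableau of shape `λ` with entries in `{0, 1, …, D-1}`. -/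
noncomputable def ssytPairCount (D n : ℕ) : ℕ :=
  Nat.card {p : Σ μ : YoungDiagram, SemistandardYoungTableau μ //
    p.1.card = n ∧ ∀ i j : ℕ, (i, j) ∈ p.1 → p.2 i j < D}

open Finset

namespace SSYTGen

/-- helper: equal nats from lt-iff. -/
lemma nat_eq_of_lt_iff {a b : ℕ} (h : ∀ j, j < a ↔ j < b) : a = b := by
  rcases lt_trichotomy a b with h1 | h1 | h1
  · exact absurd ((h a).mpr h1) (lt_irrefl a)
  · exact h1
  · exact absurd ((h b).mp h1) (lt_irrefl b)

lemma le_iff_rowLen {μ ν : YoungDiagram} :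
    μ ≤ ν ↔ ∀ i, μ.rowLen i ≤ ν.rowLen i := by
  constructor
  · intro h i
    rcases Nat.eq_zero_or_pos (μ.rowLen i) with h0 | h0
    · omega
    · have : (i, μ.rowLen i - 1) ∈ μ := by
        rw [YoungDiagram.mem_iff_lt_rowLen]; omega
      have := h this
      rw [YoungDiagram.mem_iff_lt_rowLen] at this
      omega
  · intro h p hp
    obtain ⟨i, j⟩ := p
    rw [YoungDiagram.mem_iff_lt_rowLen] at hp ⊢
    exact lt_of_lt_of_le hp (h i)

lemma yd_ext_rowLen {μ ν : YoungDiagram} (h : ∀ i, μ.rowLen i = ν.rowLen i) : μ = ν :=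
  le_antisymm (le_iff_rowLen.mpr fun i => (h i).le)
    (le_iff_rowLen.mpr fun i => (h i).ge)

lemma row_lt_card {μ : YoungDiagram} {i j : ℕ} (h : (i, j) ∈ μ) : i < μ.card := by
  have h1 : i < μ.colLen j := YoungDiagram.mem_iff_lt_colLen.mp h
  have h2 : μ.colLen j ≤ μ.card := by
    rw [YoungDiagram.colLen_eq_card]
    exact Finset.card_le_card (Finset.filter_subset _ _)
  omega

lemma col_lt_card {μ : YoungDiagram} {i j : ℕ} (h : (i, j) ∈ μ) : j < μ.card := by
  have h1 : j < μ.rowLen i := YoungDiagram.mem_iff_lt_rowLen.mp h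
  have h2 : μ.rowLen i ≤ μ.card := by
    rw [YoungDiagram.rowLen_eq_card]
    exact Finset.card_le_card (Finset.filter_subset _ _)
  omega

lemma rowLen_le_card (μ : YoungDiagram) (i : ℕ) : μ.rowLen i ≤ μ.card := by
  rcases Nat.eq_zero_or_pos (μ.rowLen i) with h0 | h0
  · omega
  · have : (i, μ.rowLen i - 1) ∈ μ := by rw [YoungDiagram.mem_iff_lt_rowLen]; omega
    have := col_lt_card this
    omega

lemma rowLen_eq_zero_of_card_le {μ : YoungDiagram} {i : ℕ} (h : μ.card ≤ i) :
    μ.rowLen i = 0 := by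
  by_contra h0
  have : (i, 0) ∈ μ := by rw [YoungDiagram.mem_iff_lt_rowLen]; omega
  have := row_lt_card this
  omega

/-- card as a sum of row lengths over any sufficiently long range. -/
lemma card_eq_sum_rowLen (μ : YoungDiagram) {N : ℕ} (hN : μ.card ≤ N) :
    μ.card = ∑ i ∈ Finset.range N, μ.rowLen i := by
  classical
  have hcells : μ.cells = (Finset.range N).biUnion (fun i => μ.row i) := by
    ext ⟨i, j⟩
    simp only [Finset.mem_biUnion, Finset.mem_range, YoungDiagram.mem_row_iff]
    constructor
    · intro h
      exact ⟨i, lt_of_lt_of_le (row_lt_card h) hN, h, rfl⟩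
    · rintro ⟨i', _, h, rfl⟩
      exact h
  have hdisj : ∀ x ∈ Finset.range N, ∀ y ∈ Finset.range N, x ≠ y →
      Disjoint (μ.row x) (μ.row y) := by
    intro x _ y _ hxy
    rw [Finset.disjoint_left]
    intro c hc hc'
    rw [YoungDiagram.mem_row_iff] at hc hc'
    exact hxy (hc.2 ▸ hc'.2 ▸ rfl)
  calc μ.card = μ.cells.card := rfl
    _ = ∑ i ∈ Finset.range N, (μ.row i).card := by rw [hcells, Finset.card_biUnion hdisj]
    _ = ∑ i ∈ Finset.range N, μ.rowLen i := by
        refine Finset.sum_congr rfl fun i _ => ?_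
        rw [YoungDiagram.rowLen_eq_card]



/-! ## Construction of a Young diagram from an antitone row-length function -/

def ofFn (f : ℕ → ℕ) (hf : Antitone f) (N : ℕ) (hN : f N = 0) : YoungDiagram where
  cells := (Finset.range N ×ˢ Finset.range (f 0 + 1)).filter (fun p => p.2 < f p.1)
  isLowerSet := by
    rintro ⟨i, j⟩ ⟨i', j'⟩ ⟨hi, hj⟩ h
    simp only [Finset.coe_filter, Set.mem_setOf_eq, Finset.mem_product, Finset.mem_range] at h ⊢
    obtain ⟨⟨_, _⟩, hlt⟩ := h
    have h1 : f i ≤ f i' := hf hi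
    have h2 : f i' ≤ f 0 := hf (Nat.zero_le _)
    refine ⟨⟨?_, by omega⟩, by omega⟩
    by_contra hc
    have : f i' ≤ f N := hf (by omega)
    omega

lemma mem_ofFn {f : ℕ → ℕ} {hf : Antitone f} {N : ℕ} {hN : f N = 0} {i j : ℕ} :
    (i, j) ∈ ofFn f hf N hN ↔ j < f i := by
  show (i, j) ∈ Finset.filter _ _ ↔ _
  simp only [Finset.mem_filter, Finset.mem_product, Finset.mem_range]
  constructor
  · rintro ⟨_, h⟩; exact h
  · intro h
    have h2 : f i ≤ f 0 := hf (Nat.zero_le _)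
    refine ⟨⟨?_, by omega⟩, h⟩
    by_contra hc
    have : f i ≤ f N := hf (by omega)
    omega

lemma rowLen_ofFn {f : ℕ → ℕ} {hf : Antitone f} {N : ℕ} {hN : f N = 0} (i : ℕ) :
    (ofFn f hf N hN).rowLen i = f i := by
  apply nat_eq_of_lt_iff
  intro j
  rw [← YoungDiagram.mem_iff_lt_rowLen, mem_ofFn]

/-! ## Horizontal strips -/

/-- `HStrip μ ν` : `ν ⊆ μ` and `μ/ν` is a horizontal strip. -/
def HStrip (μ ν : YoungDiagram) : Prop :=
  ∀ i, ν.rowLen i ≤ μ.rowLen i ∧ μ.rowLen (i + 1) ≤ ν.rowLen i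

lemma HStrip.le {μ ν : YoungDiagram} (h : HStrip μ ν) : ν ≤ μ :=
  le_iff_rowLen.mpr fun i => (h i).1

lemma HStrip.card_le {μ ν : YoungDiagram} (h : HStrip μ ν) : ν.card ≤ μ.card :=
  Finset.card_le_card h.le

lemma HStrip.refl (μ : YoungDiagram) : HStrip μ μ :=
  fun i => ⟨le_rfl, μ.rowLen_anti i (i+1) (by omega)⟩

lemma HStrip.mem_up {μ ν : YoungDiagram} (h : HStrip μ ν) {i j : ℕ}
    (hc : (i + 1, j) ∈ μ) : (i, j) ∈ ν := by
  rw [YoungDiagram.mem_iff_lt_rowLen] at hc ⊢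
  exact lt_of_lt_of_le hc (h i).2

lemma HStrip.of_cells {μ ν : YoungDiagram} (hle : ν ≤ μ)
    (h : ∀ i j, (i + 1, j) ∈ μ → (i, j) ∈ ν) : HStrip μ ν := by
  intro i
  refine ⟨le_iff_rowLen.mp hle i, ?_⟩
  rcases Nat.eq_zero_or_pos (μ.rowLen (i+1)) with h0 | h0
  · omega
  · have : (i + 1, μ.rowLen (i+1) - 1) ∈ μ := by
      rw [YoungDiagram.mem_iff_lt_rowLen]; omega
    have := h i _ this
    rw [YoungDiagram.mem_iff_lt_rowLen] at this
    omega

lemma hstrip_bot_bot : HStrip ⊥ ⊥ := HStrip.refl ⊥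

lemma rowLen_bot (i : ℕ) : (⊥ : YoungDiagram).rowLen i = 0 := by
  apply nat_eq_of_lt_iff
  intro j
  rw [← YoungDiagram.mem_iff_lt_rowLen]
  simp [YoungDiagram.notMem_bot]

lemma eq_bot_of_card_eq_zero {μ : YoungDiagram} (h : μ.card = 0) : μ = ⊥ := by
  apply yd_ext_rowLen
  intro i
  rw [rowLen_bot]
  have := rowLen_le_card μ i
  omega



lemma card_eq_sum_rowLen' (μ : YoungDiagram) {N : ℕ} (hN : ∀ i, N ≤ i → μ.rowLen i = 0) :
    μ.card = ∑ i ∈ Finset.range N, μ.rowLen i := by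
  classical
  have hcells : μ.cells = (Finset.range N).biUnion (fun i => μ.row i) := by
    ext ⟨i, j⟩
    simp only [Finset.mem_biUnion, Finset.mem_range, YoungDiagram.mem_row_iff]
    constructor
    · intro h
      refine ⟨i, ?_, h, rfl⟩
      by_contra hc
      have h0 := hN i (by omega)
      have := YoungDiagram.mem_iff_lt_rowLen.mp h
      omega
    · rintro ⟨i', _, h, rfl⟩
      exact h
  have hdisj : ∀ x ∈ Finset.range N, ∀ y ∈ Finset.range N, x ≠ y →
      Disjoint (μ.row x) (μ.row y) := by
    intro x _ y _ hxy
    rw [Finset.disjoint_left]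
    intro c hc hc'
    rw [YoungDiagram.mem_row_iff] at hc hc'
    exact hxy (hc.2 ▸ hc'.2 ▸ rfl)
  calc μ.card = μ.cells.card := rfl
    _ = ∑ i ∈ Finset.range N, (μ.row i).card := by rw [hcells, Finset.card_biUnion hdisj]
    _ = ∑ i ∈ Finset.range N, μ.rowLen i := by
        refine Finset.sum_congr rfl fun i _ => ?_
        rw [YoungDiagram.rowLen_eq_card]

/-! ## The double-strip lemma (shape-level bijection) -/

section StripEquiv

variable (ν ρ : YoungDiagram)

def mnn (i : ℕ) : ℕ := min (ν.rowLen i) (ρ.rowLen i)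
def mxx (i : ℕ) : ℕ := max (ν.rowLen i) (ρ.rowLen i)

lemma mnn_zero {i : ℕ} (h : ν.card ≤ i) : mnn ν ρ i = 0 := by
  have := rowLen_eq_zero_of_card_le (μ := ν) h
  simp [mnn, this]

lemma mxx_zero {i : ℕ} (h : ν.card + ρ.card ≤ i) : mxx ν ρ i = 0 := by
  have h1 := rowLen_eq_zero_of_card_le (μ := ν) (i := i) (by omega)
  have h2 := rowLen_eq_zero_of_card_le (μ := ρ) (i := i) (by omega)
  simp [mxx, h1, h2]

lemma sum_mnn_mxx {M : ℕ} (hM : ν.card + ρ.card ≤ M) :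
    ∑ i ∈ Finset.range M, (mnn ν ρ i + mxx ν ρ i) = ν.card + ρ.card := by
  have h1 : ∑ i ∈ Finset.range M, (mnn ν ρ i + mxx ν ρ i)
      = ∑ i ∈ Finset.range M, (ν.rowLen i + ρ.rowLen i) := by
    refine Finset.sum_congr rfl fun i _ => ?_
    simp only [mnn, mxx]; omega
  rw [h1, Finset.sum_add_distrib,
    ← card_eq_sum_rowLen ν (by omega), ← card_eq_sum_rowLen ρ (by omega)]

/-- the row lengths of the image diagram -/
def fwdFn (μ : YoungDiagram) (i : ℕ) : ℕ :=
  mnn ν ρ i - (μ.rowLen (i + 1) - mxx ν ρ (i + 1))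

variable {ν ρ}

section Fwd
variable {μ : YoungDiagram} (hμν : HStrip μ ν) (hμρ : HStrip μ ρ)

include hμν hμρ

lemma fwd_fact1 (i : ℕ) : μ.rowLen (i + 1) ≤ mnn ν ρ i := by
  have h1 := (hμν i).2
  have h2 := (hμρ i).2
  simp only [mnn]; omega

lemma fwd_fact2 (i : ℕ) : mxx ν ρ (i + 1) ≤ μ.rowLen (i + 1) := by
  have h1 := (hμν (i + 1)).1
  have h2 := (hμρ (i + 1)).1
  simp only [mxx]; omega

lemma fwdFn_anti : Antitone (fwdFn ν ρ μ) := by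
  apply antitone_nat_of_succ_le
  intro i
  have f1 := fwd_fact1 hμν hμρ i
  have f1' := fwd_fact1 hμν hμρ (i + 1)
  have f2 := fwd_fact2 hμν hμρ i
  have f2' := fwd_fact2 hμν hμρ (i + 1)
  have hm : mnn ν ρ (i+1) ≤ mxx ν ρ (i+1) := by simp only [mnn, mxx]; omega
  simp only [fwdFn]
  omega

lemma fwdFn_zero : fwdFn ν ρ μ ν.card = 0 := by
  have := mnn_zero ν ρ (i := ν.card) le_rfl
  simp only [fwdFn, this]
  omega

/-- forward map of the double-strip bijection -/
def toDiag : YoungDiagram :=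
  ofFn (fwdFn ν ρ μ) (fwdFn_anti hμν hμρ) ν.card (fwdFn_zero hμν hμρ)

lemma toDiag_rowLen (i : ℕ) : (toDiag hμν hμρ).rowLen i = fwdFn ν ρ μ i :=
  rowLen_ofFn i

lemma toDiag_strip_nu : HStrip ν (toDiag hμν hμρ) := by
  intro i
  rw [toDiag_rowLen hμν hμρ]
  have f1 := fwd_fact1 hμν hμρ i
  have f2 := fwd_fact2 hμν hμρ i
  simp only [fwdFn, mnn, mxx] at *
  omega

lemma toDiag_strip_rho : HStrip ρ (toDiag hμν hμρ) := by
  intro i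
  rw [toDiag_rowLen hμν hμρ]
  have f1 := fwd_fact1 hμν hμρ i
  have f2 := fwd_fact2 hμν hμρ i
  simp only [fwdFn, mnn, mxx] at *
  omega

lemma toDiag_card :
    (toDiag hμν hμρ).card + μ.card + mxx ν ρ 0 = ν.card + ρ.card + μ.rowLen 0 := by
  set M := ν.card + ρ.card + μ.card with hM
  have h1 : (toDiag hμν hμρ).card = ∑ i ∈ Finset.range M, fwdFn ν ρ μ i := by
    have := card_eq_sum_rowLen' (toDiag hμν hμρ) (N := M) (fun i hi => by
      rw [toDiag_rowLen hμν hμρ]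
      have := mnn_zero ν ρ (i := i) (by omega)
      simp only [fwdFn, this]; omega)
    rw [this]
    exact Finset.sum_congr rfl fun i _ => toDiag_rowLen hμν hμρ i
  have h2 : μ.card = μ.rowLen 0 + ∑ i ∈ Finset.range M, μ.rowLen (i + 1) := by
    rw [card_eq_sum_rowLen μ (N := M + 1) (by omega), Finset.sum_range_succ']
    omega
  have h4 : ∑ i ∈ Finset.range M, fwdFn ν ρ μ i + ∑ i ∈ Finset.range M, μ.rowLen (i+1)
      = ∑ i ∈ Finset.range M, mnn ν ρ i + ∑ i ∈ Finset.range M, mxx ν ρ (i+1) := by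
    rw [← Finset.sum_add_distrib, ← Finset.sum_add_distrib]
    refine Finset.sum_congr rfl fun i _ => ?_
    have f1 := fwd_fact1 hμν hμρ i
    have f2 := fwd_fact2 hμν hμρ i
    simp only [fwdFn]
    omega
  have h5 : ∑ i ∈ Finset.range (M+1), mxx ν ρ i
      = mxx ν ρ 0 + ∑ i ∈ Finset.range M, mxx ν ρ (i+1) := by
    rw [Finset.sum_range_succ']; omega
  have h6 : ∑ i ∈ Finset.range (M+1), mnn ν ρ i = ∑ i ∈ Finset.range M, mnn ν ρ i := by
    rw [Finset.sum_range_succ, mnn_zero ν ρ (by omega)]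
    omega
  have h7 : ∑ i ∈ Finset.range (M+1), mnn ν ρ i + ∑ i ∈ Finset.range (M+1), mxx ν ρ i
      = ν.card + ρ.card := by
    rw [← Finset.sum_add_distrib]
    exact sum_mnn_mxx ν ρ (by omega)
  omega

end Fwd

section Bwd
variable (ν ρ) in
/-- inverse map's row lengths -/
def bwdFn (σ : YoungDiagram) (a1 : ℕ) : ℕ → ℕ
  | 0 => mxx ν ρ 0 + a1
  | (i + 1) => mxx ν ρ (i + 1) + (mnn ν ρ i - σ.rowLen i)

variable {σ : YoungDiagram} {a1 : ℕ} (hνσ : HStrip ν σ) (hρσ : HStrip ρ σ)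

include hνσ hρσ

lemma bwd_fact1 (i : ℕ) : σ.rowLen i ≤ mnn ν ρ i := by
  have h1 := (hνσ i).1
  have h2 := (hρσ i).1
  simp only [mnn]; omega

lemma bwd_fact2 (i : ℕ) : mxx ν ρ (i + 1) ≤ σ.rowLen i := by
  have h1 := (hνσ i).2
  have h2 := (hρσ i).2
  simp only [mxx]; omega

lemma bwdFn_anti : Antitone (bwdFn ν ρ σ a1) := by
  apply antitone_nat_of_succ_le
  intro i
  match i with
  | 0 =>
    have f1 := bwd_fact1 hνσ hρσ 0
    have f2 := bwd_fact2 hνσ hρσ 0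
    have hm : mnn ν ρ 0 ≤ mxx ν ρ 0 := by simp only [mnn, mxx]; omega
    simp only [bwdFn]
    omega
  | (i + 1) =>
    have f1 := bwd_fact1 hνσ hρσ (i + 1)
    have f2 := bwd_fact2 hνσ hρσ (i + 1)
    have f1' := bwd_fact1 hνσ hρσ i
    have f2' := bwd_fact2 hνσ hρσ i
    have hm : mnn ν ρ (i+1) ≤ mxx ν ρ (i+1) := by simp only [mnn, mxx]; omega
    simp only [bwdFn]
    omega

lemma bwdFn_zero : bwdFn ν ρ σ a1 (ν.card + ρ.card + 1) = 0 := by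
  have h1 := mxx_zero ν ρ (i := ν.card + ρ.card + 1) (by omega)
  have h2 := mnn_zero ν ρ (i := ν.card + ρ.card) (by omega)
  have h3 := bwd_fact1 hνσ hρσ (ν.card + ρ.card)
  show mxx ν ρ (ν.card + ρ.card + 1) + (mnn ν ρ (ν.card + ρ.card) - σ.rowLen (ν.card + ρ.card)) = 0
  omega

variable (a1) in
/-- the inverse map of the double-strip bijection -/
def invDiag : YoungDiagram :=
  ofFn (bwdFn ν ρ σ a1) (bwdFn_anti hνσ hρσ) (ν.card + ρ.card + 1) (bwdFn_zero hνσ hρσ)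

lemma invDiag_rowLen (i : ℕ) : (invDiag a1 hνσ hρσ).rowLen i = bwdFn ν ρ σ a1 i :=
  rowLen_ofFn i

lemma invDiag_strip_nu : HStrip (invDiag a1 hνσ hρσ) ν := by
  intro i
  simp only [invDiag_rowLen hνσ hρσ]
  have f1 := bwd_fact1 hνσ hρσ i
  have f2 := bwd_fact2 hνσ hρσ i
  match i with
  | 0 =>
    have f2' := bwd_fact2 hνσ hρσ 0
    simp only [bwdFn, mnn, mxx] at *
    omega
  | (i+1) =>
    have f1' := bwd_fact1 hνσ hρσ (i+1)
    have f2' := bwd_fact2 hνσ hρσ (i+1)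
    simp only [bwdFn, mnn, mxx] at *
    omega

lemma invDiag_strip_rho : HStrip (invDiag a1 hνσ hρσ) ρ := by
  intro i
  simp only [invDiag_rowLen hνσ hρσ]
  have f1 := bwd_fact1 hνσ hρσ i
  have f2 := bwd_fact2 hνσ hρσ i
  match i with
  | 0 =>
    have f2' := bwd_fact2 hνσ hρσ 0
    simp only [bwdFn, mnn, mxx] at *
    omega
  | (i+1) =>
    have f1' := bwd_fact1 hνσ hρσ (i+1)
    have f2' := bwd_fact2 hνσ hρσ (i+1)
    simp only [bwdFn, mnn, mxx] at *
    omega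

lemma invDiag_card :
    (invDiag a1 hνσ hρσ).card + σ.card = ν.card + ρ.card + a1 := by
  have hσν : σ.card ≤ ν.card := HStrip.card_le hνσ
  set M := ν.card + ρ.card + 1 with hM
  have h1 : (invDiag a1 hνσ hρσ).card
      = bwdFn ν ρ σ a1 0 + ∑ i ∈ Finset.range M, bwdFn ν ρ σ a1 (i + 1) := by
    have hv : ∀ i, M + 1 ≤ i → (invDiag a1 hνσ hρσ).rowLen i = 0 := by
      intro i hi
      rw [invDiag_rowLen hνσ hρσ]
      match i, hi with
      | (j+1), hi =>
        have h1 := mxx_zero ν ρ (i := j + 1) (by omega)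
        have h2 := mnn_zero ν ρ (i := j) (by omega)
        show mxx ν ρ (j + 1) + (mnn ν ρ j - σ.rowLen j) = 0
        omega
    rw [card_eq_sum_rowLen' _ hv]
    have : ∀ i ∈ Finset.range (M+1), (invDiag a1 hνσ hρσ).rowLen i = bwdFn ν ρ σ a1 i :=
      fun i _ => invDiag_rowLen hνσ hρσ i
    rw [Finset.sum_congr rfl this, Finset.sum_range_succ']
    omega
  have h2 : σ.card = ∑ i ∈ Finset.range M, σ.rowLen i := card_eq_sum_rowLen σ (by omega)
  have h4 : ∑ i ∈ Finset.range M, bwdFn ν ρ σ a1 (i+1) + ∑ i ∈ Finset.range M, σ.rowLen i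
      = ∑ i ∈ Finset.range M, mnn ν ρ i + ∑ i ∈ Finset.range M, mxx ν ρ (i+1) := by
    rw [← Finset.sum_add_distrib, ← Finset.sum_add_distrib]
    refine Finset.sum_congr rfl fun i _ => ?_
    have f1 := bwd_fact1 hνσ hρσ i
    have f2 := bwd_fact2 hνσ hρσ i
    show mxx ν ρ (i+1) + (mnn ν ρ i - σ.rowLen i) + σ.rowLen i = _
    omega
  have h5 : ∑ i ∈ Finset.range (M+1), mxx ν ρ i
      = mxx ν ρ 0 + ∑ i ∈ Finset.range M, mxx ν ρ (i+1) := by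
    rw [Finset.sum_range_succ']; omega
  have h6 : ∑ i ∈ Finset.range (M+1), mnn ν ρ i = ∑ i ∈ Finset.range M, mnn ν ρ i := by
    rw [Finset.sum_range_succ, mnn_zero ν ρ (by omega)]
    omega
  have h7 : ∑ i ∈ Finset.range (M+1), mnn ν ρ i + ∑ i ∈ Finset.range (M+1), mxx ν ρ i
      = ν.card + ρ.card := by
    rw [← Finset.sum_add_distrib]
    exact sum_mnn_mxx ν ρ (by omega)
  have h8 : bwdFn ν ρ σ a1 0 = mxx ν ρ 0 + a1 := rfl
  omega

end Bwd

/-- The double-strip bijection. -/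
noncomputable def stripEquiv (ν ρ : YoungDiagram) (n : ℕ) :
    {μ : YoungDiagram // HStrip μ ν ∧ HStrip μ ρ ∧ μ.card = n} ≃
      {σ : YoungDiagram // HStrip ν σ ∧ HStrip ρ σ ∧ ρ.card + ν.card ≤ σ.card + n} where
  toFun x :=
    ⟨toDiag x.2.1 x.2.2.1, toDiag_strip_nu _ _, toDiag_strip_rho _ _, by
      have hc := toDiag_card x.2.1 x.2.2.1
      have h0 : mxx ν ρ 0 ≤ x.1.rowLen 0 := by
        have h1 := (x.2.1 0).1
        have h2 := (x.2.2.1 0).1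
        simp only [mxx]; omega
      have hr := rowLen_le_card x.1 0
      have := x.2.2.2
      omega⟩
  invFun y :=
    ⟨invDiag (y.1.card + n - (ν.card + ρ.card)) y.2.1 y.2.2.1,
      invDiag_strip_nu _ _, invDiag_strip_rho _ _, by
      have hc := invDiag_card (a1 := y.1.card + n - (ν.card + ρ.card)) y.2.1 y.2.2.1
      have := y.2.2.2
      omega⟩
  left_inv := by
    rintro ⟨μ, hμν, hμρ, hcard⟩
    apply Subtype.ext
    apply yd_ext_rowLen
    intro i
    rw [invDiag_rowLen]
    have hc := toDiag_card hμν hμρ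
    match i with
    | 0 =>
      show mxx ν ρ 0 + ((toDiag hμν hμρ).card + n - (ν.card + ρ.card)) = μ.rowLen 0
      have h0 : mxx ν ρ 0 ≤ μ.rowLen 0 := by
        have h1 := (hμν 0).1
        have h2 := (hμρ 0).1
        simp only [mxx]; omega
      omega
    | (i+1) =>
      show mxx ν ρ (i+1) + (mnn ν ρ i - (toDiag hμν hμρ).rowLen i) = μ.rowLen (i+1)
      rw [toDiag_rowLen]
      have f1 := fwd_fact1 hμν hμρ i
      have f2 := fwd_fact2 hμν hμρ i
      simp only [fwdFn]
      omega
  right_inv := by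
    rintro ⟨σ, hνσ, hρσ, hle⟩
    apply Subtype.ext
    apply yd_ext_rowLen
    intro i
    rw [toDiag_rowLen]
    show mnn ν ρ i -
      ((invDiag (σ.card + n - (ν.card + ρ.card)) hνσ hρσ).rowLen (i+1) - mxx ν ρ (i+1)) = σ.rowLen i
    rw [invDiag_rowLen]
    show mnn ν ρ i - ((mxx ν ρ (i+1) + (mnn ν ρ i - σ.rowLen i)) - mxx ν ρ (i+1)) = σ.rowLen i
    have f1 := bwd_fact1 hνσ hρσ i
    omega

end StripEquiv



/-! ## Bounded semistandard tableaux and the branching rule -/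

/-- semistandard tableaux of shape `μ` with entries `< E` -/
def SB (E : ℕ) (μ : YoungDiagram) :=
  {T : SemistandardYoungTableau μ // ∀ i j, (i, j) ∈ μ → T i j < E}

section Branch

variable {E : ℕ} {l : YoungDiagram}

/-- cells of `l` whose entry is `< E` -/
def resDiag (T : SemistandardYoungTableau l) (E : ℕ) : YoungDiagram where
  cells := l.cells.filter (fun p => T p.1 p.2 < E)
  isLowerSet := by
    rintro ⟨i, j⟩ ⟨i', j'⟩ ⟨hi, hj⟩ h
    simp only [Finset.coe_filter, Set.mem_setOf_eq, Finset.mem_coe,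
      YoungDiagram.mem_cells] at h ⊢
    obtain ⟨hmem, hlt⟩ := h
    have hmem' : (i', j') ∈ l := l.up_left_mem hi hj hmem
    have h1 : T i' j' ≤ T i' j := T.row_weak_of_le hj (l.up_left_mem hi le_rfl hmem)
    have h2 : T i' j ≤ T i j := T.col_weak hi hmem
    exact ⟨hmem', by omega⟩

lemma mem_resDiag {T : SemistandardYoungTableau l} {E i j} :
    (i, j) ∈ resDiag T E ↔ (i, j) ∈ l ∧ T i j < E := by
  show (i, j) ∈ Finset.filter _ _ ↔ _
  simp [Finset.mem_filter]

lemma resDiag_strip (T : SemistandardYoungTableau l) (hbd : ∀ i j, (i, j) ∈ l → T i j < E + 1) :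
    HStrip l (resDiag T E) := by
  apply HStrip.of_cells
  · intro p hp
    obtain ⟨i, j⟩ := p
    exact (mem_resDiag.mp hp).1
  · intro i j h
    have h1 : (i, j) ∈ l := l.up_left_mem (by omega) le_rfl h
    have h2 : T i j < T (i + 1) j := T.col_strict (by omega) h
    have h3 := hbd (i + 1) j h
    rw [mem_resDiag]
    exact ⟨h1, by omega⟩

/-- restriction of a tableau to cells with entries `< E` -/
def resTab (T : SemistandardYoungTableau l) (E : ℕ) :
    SemistandardYoungTableau (resDiag T E) where
  entry i j := if T i j < E then T i j else 0
  row_weak' := by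
    intro i j1 j2 hj h
    rw [mem_resDiag] at h
    have h1 : (i, j1) ∈ l := l.up_left_mem le_rfl (by omega) h.1
    have h2 : T i j1 ≤ T i j2 := T.row_weak hj h.1
    rw [if_pos h.2, if_pos (by omega)]
    exact h2
  col_strict' := by
    intro i1 i2 j hi h
    rw [mem_resDiag] at h
    have h2 : T i1 j ≤ T i2 j := T.col_weak (by omega) h.1
    have h3 : T i1 j < T i2 j := T.col_strict hi h.1
    rw [if_pos h.2, if_pos (by omega)]
    exact h3
  zeros' := by
    intro i j h
    rw [mem_resDiag] at h
    by_cases hc : T i j < E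
    · rw [if_pos hc]
      by_cases hl : (i, j) ∈ l
      · exact absurd ⟨hl, hc⟩ h
      · exact T.zeros hl
    · rw [if_neg hc]

lemma resTab_bdd (T : SemistandardYoungTableau l) (E : ℕ) :
    ∀ i j, (i, j) ∈ resDiag T E → resTab T E i j < E := by
  intro i j h
  rw [mem_resDiag] at h
  show (if T i j < E then T i j else 0) < E
  rw [if_pos h.2]
  exact h.2

/-- extension of a tableau on `ν` to `l` by the maximal letter `E` -/
def extTab (ν : YoungDiagram) (h : HStrip l ν) (T' : SemistandardYoungTableau ν)
    (hbd : ∀ i j, (i, j) ∈ ν → T' i j < E) : SemistandardYoungTableau l where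
  entry i j := if (i, j) ∈ ν then T' i j else if (i, j) ∈ l then E else 0
  row_weak' := by
    intro i j1 j2 hj hcell
    by_cases h2 : (i, j2) ∈ ν
    · have h1 : (i, j1) ∈ ν := ν.up_left_mem le_rfl (by omega) h2
      rw [if_pos h1, if_pos h2]
      exact T'.row_weak hj h2
    · rw [if_neg h2, if_pos hcell]
      by_cases h1 : (i, j1) ∈ ν
      · rw [if_pos h1]
        exact (hbd i j1 h1).le
      · rw [if_neg h1, if_pos (l.up_left_mem le_rfl (by omega) hcell)]
  col_strict' := by
    intro i1 i2 j hi hcell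
    by_cases h2 : (i2, j) ∈ ν
    · have h1 : (i1, j) ∈ ν := ν.up_left_mem (by omega) le_rfl h2
      rw [if_pos h1, if_pos h2]
      exact T'.col_strict hi h2
    · rw [if_neg h2, if_pos hcell]
      have h3 : (i1 + 1, j) ∈ l := l.up_left_mem (by omega) le_rfl hcell
      have h1 : (i1, j) ∈ ν := h.mem_up h3
      rw [if_pos h1]
      exact hbd i1 j h1
  zeros' := by
    intro i j hc
    have h1 : (i, j) ∉ ν := fun hmem => hc (h.le hmem)
    rw [if_neg h1, if_neg hc]

lemma extTab_bdd (ν : YoungDiagram) (h : HStrip l ν) (T' : SemistandardYoungTableau ν)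
    (hbd : ∀ i j, (i, j) ∈ ν → T' i j < E) :
    ∀ i j, (i, j) ∈ l → extTab ν h T' hbd i j < E + 1 := by
  intro i j hc
  show (if (i, j) ∈ ν then T' i j else if (i, j) ∈ l then E else 0) < E + 1
  by_cases h1 : (i, j) ∈ ν
  · rw [if_pos h1]
    have := hbd i j h1
    omega
  · rw [if_neg h1, if_pos hc]
    omega

/-- helper for proving equality in the branching sigma type -/
lemma branch_sigma_eq {νp₁ νp₂ : {ν : YoungDiagram // HStrip l ν}}
    {T₁ : SB E νp₁.1} {T₂ : SB E νp₂.1} (h : νp₁.1 = νp₂.1)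
    (h2 : ∀ i j, T₁.1 i j = T₂.1 i j) :
    (⟨νp₁, T₁⟩ : Σ νp : {ν : YoungDiagram // HStrip l ν}, SB E νp.1) = ⟨νp₂, T₂⟩ := by
  obtain ⟨ν₁, p₁⟩ := νp₁
  obtain ⟨ν₂, p₂⟩ := νp₂
  dsimp at h
  subst h
  obtain ⟨S₁, q₁⟩ := T₁
  obtain ⟨S₂, q₂⟩ := T₂
  have : S₁ = S₂ := SemistandardYoungTableau.ext h2
  subst this
  rfl

/-- The branching rule: removing the letter `E` from a tableau bounded by `E+1`. -/
noncomputable def branchEquiv (E : ℕ) (l : YoungDiagram) :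
    SB (E + 1) l ≃ Σ νp : {ν : YoungDiagram // HStrip l ν}, SB E νp.1 where
  toFun T := ⟨⟨resDiag T.1 E, resDiag_strip T.1 T.2⟩, ⟨resTab T.1 E, resTab_bdd T.1 E⟩⟩
  invFun x := ⟨extTab x.1.1 x.1.2 x.2.1 x.2.2, extTab_bdd x.1.1 x.1.2 x.2.1 x.2.2⟩
  left_inv := by
    rintro ⟨T, hT⟩
    apply Subtype.ext
    apply SemistandardYoungTableau.ext
    intro i j
    show (if (i, j) ∈ resDiag T E then (if T i j < E then T i j else 0)
      else if (i, j) ∈ l then E else 0) = T i j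
    by_cases h1 : (i, j) ∈ resDiag T E
    · rw [if_pos h1, if_pos (mem_resDiag.mp h1).2]
    · rw [if_neg h1]
      by_cases h2 : (i, j) ∈ l
      · rw [if_pos h2]
        have h3 := hT i j h2
        have h4 : ¬ T i j < E := fun hc => h1 (mem_resDiag.mpr ⟨h2, hc⟩)
        omega
      · rw [if_neg h2, T.zeros h2]
  right_inv := by
    rintro ⟨⟨ν, hstrip⟩, ⟨T', hbd⟩⟩
    have key : ∀ i j, (extTab ν hstrip T' hbd) i j < E ↔ ((i, j) ∈ l ∧ (i, j) ∈ ν) ∨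
        ((i, j) ∉ l ∧ (i, j) ∉ ν ∧ 0 < E) := by
      intro i j
      show (if (i, j) ∈ ν then T' i j else if (i, j) ∈ l then E else 0) < E ↔ _
      by_cases h1 : (i, j) ∈ ν
      · rw [if_pos h1]
        have h2 := hbd i j h1
        have h3 : (i, j) ∈ l := hstrip.le h1
        simp [h1, h2, h3]
      · rw [if_neg h1]
        by_cases h2 : (i, j) ∈ l
        · simp [h1, h2]
        · simp [h1, h2]
    have hshape : resDiag (extTab ν hstrip T' hbd) E = ν := by
      ext ⟨i, j⟩
      rw [YoungDiagram.mem_cells, mem_resDiag]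
      constructor
      · rintro ⟨hl, hlt⟩
        rcases (key i j).mp hlt with h | h
        · exact h.2
        · exact absurd hl h.1
      · intro hν
        rw [YoungDiagram.mem_cells] at hν
        have h2 := hbd i j hν
        have h3 : (i, j) ∈ l := hstrip.le hν
        show (i, j) ∈ l ∧ (if (i, j) ∈ ν then T' i j else _) < E
        rw [if_pos hν]
        exact ⟨h3, h2⟩
    apply branch_sigma_eq hshape
    intro i j
    show (if extTab ν hstrip T' hbd i j < E then extTab ν hstrip T' hbd i j else 0) = T' i j
    by_cases h1 : (i, j) ∈ ν
    · have h2 := hbd i j h1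
      have : extTab ν hstrip T' hbd i j = T' i j := by
        show (if (i, j) ∈ ν then T' i j else _) = T' i j
        rw [if_pos h1]
      rw [this, if_pos h2]
    · rw [T'.zeros h1]
      by_cases h2 : extTab ν hstrip T' hbd i j < E
      · rw [if_pos h2]
        rcases (key i j).mp h2 with h | h
        · exact absurd h.2 h1
        · show (if (i, j) ∈ ν then T' i j else if (i, j) ∈ l then E else 0) = 0
          rw [if_neg h1, if_neg h.1]
      · rw [if_neg h2]

end Branch



/-! ## Finiteness and cardinalities -/

instance finiteSB (E : ℕ) (μ : YoungDiagram) : Finite (SB E μ) := by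
  classical
  apply Finite.of_injective (f := fun (T : SB E μ) =>
    (fun c : μ.cells => (⟨T.1 c.1.1 c.1.2,
      T.2 c.1.1 c.1.2 (by rw [← YoungDiagram.mem_cells]; exact (Prod.mk.eta (p := c.1)) ▸ c.2)⟩
        : Fin E)))
  intro T T' h
  apply Subtype.ext
  apply SemistandardYoungTableau.ext
  intro i j
  by_cases hm : (i, j) ∈ μ
  · have := congrFun h ⟨(i, j), hm⟩
    exact congrArg Fin.val this
  · rw [T.1.zeros hm, T'.1.zeros hm]

lemma finite_yd_subtype (P : YoungDiagram → Prop) (n : ℕ) (h : ∀ μ, P μ → μ.card ≤ n) :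
    Finite {μ : YoungDiagram // P μ} := by
  classical
  apply Finite.of_injective (f := fun (x : {μ : YoungDiagram // P μ}) =>
    (⟨x.1.cells, by
      rw [Finset.mem_powerset]
      intro c hc
      obtain ⟨i, j⟩ := c
      rw [YoungDiagram.mem_cells] at hc
      have h1 := row_lt_card hc
      have h2 := col_lt_card hc
      have h3 := h x.1 x.2
      rw [Finset.mem_product, Finset.mem_range, Finset.mem_range]
      omega⟩ :
      {s // s ∈ (Finset.range n ×ˢ Finset.range n).powerset}))
  intro x y hxy
  apply Subtype.ext
  apply YoungDiagram.ext
  exact congrArg Subtype.val hxy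

lemma natCard_sigma {ι : Type*} [Fintype ι] (α : ι → Type*) [∀ i, Finite (α i)] :
    Nat.card (Σ i, α i) = ∑ i, Nat.card (α i) := by
  letI : ∀ i, Fintype (α i) := fun i => Fintype.ofFinite _
  simp [Nat.card_eq_fintype_card, Fintype.card_sigma]

/-- number of semistandard tableaux of shape `μ` with entries `< E` -/
noncomputable def N (E : ℕ) (μ : YoungDiagram) : ℕ := Nat.card (SB E μ)

lemma card_bot : (⊥ : YoungDiagram).card = 0 := by
  show (⊥ : YoungDiagram).cells.card = 0
  rw [YoungDiagram.cells_bot]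
  rfl

instance uniqueSBbot (E : ℕ) : Unique (SB E ⊥) where
  default := ⟨SemistandardYoungTableau.highestWeight ⊥,
    fun i j h => absurd h (YoungDiagram.notMem_bot _)⟩
  uniq := by
    intro T
    apply Subtype.ext
    apply SemistandardYoungTableau.ext
    intro i j
    rw [T.1.zeros (YoungDiagram.notMem_bot _)]
    show 0 = SemistandardYoungTableau.highestWeight ⊥ i j
    simp [YoungDiagram.notMem_bot]

lemma N_bot (E : ℕ) : N E ⊥ = 1 := Nat.card_unique

lemma mem_zero_of_sb_zero {μ : YoungDiagram} (T : SB 0 μ) : μ = ⊥ := by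
  by_contra h
  have hne : μ.cells.Nonempty := by
    rw [Finset.nonempty_iff_ne_empty]
    intro hc
    exact h (by ext c; simp [hc, YoungDiagram.notMem_bot])
  obtain ⟨⟨i, j⟩, hc⟩ := hne
  have h00 : (0, 0) ∈ μ := μ.up_left_mem (Nat.zero_le _) (Nat.zero_le _) hc
  exact absurd (T.2 0 0 h00) (by omega)

lemma N_zero {μ : YoungDiagram} (h : μ ≠ ⊥) : N 0 μ = 0 := by
  have : IsEmpty (SB 0 μ) := ⟨fun T => h (mem_zero_of_sb_zero T)⟩
  exact Nat.card_of_isEmpty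

lemma sum_multichoose (E k : ℕ) :
    ∑ m ∈ Finset.range (k + 1), Nat.multichoose E m = Nat.multichoose (E + 1) k := by
  induction k with
  | zero => simp [Nat.multichoose_zero_right]
  | succ k ih =>
    rw [Finset.sum_range_succ, ih, Nat.multichoose_succ_succ]
    omega

/-! ## The Pieri-type counting rule -/

/-- pairs of a horizontal strip extension of `ν` of size `k` and a bounded tableau on it -/
def PS (E : ℕ) (ν : YoungDiagram) (k : ℕ) :=
  Σ μp : {μ : YoungDiagram // HStrip μ ν ∧ μ.card = ν.card + k}, SB E μp.1

instance finitePSindex (ν : YoungDiagram) (k : ℕ) :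
    Finite {μ : YoungDiagram // HStrip μ ν ∧ μ.card = ν.card + k} :=
  finite_yd_subtype _ (ν.card + k) (fun μ h => h.2.le)

instance finitePS (E : ℕ) (ν : YoungDiagram) (k : ℕ) : Finite (PS E ν k) := by
  unfold PS; infer_instance

instance finiteStripBelow (ν : YoungDiagram) : Finite {σ : YoungDiagram // HStrip ν σ} :=
  finite_yd_subtype _ ν.card (fun σ h => h.card_le)

lemma sigma_subtype_eq {E : ℕ} {P : YoungDiagram → Prop} {νp₁ νp₂ : {ν : YoungDiagram // P ν}}
    {T₁ : SB E νp₁.1} {T₂ : SB E νp₂.1} (h : νp₁.1 = νp₂.1)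
    (h2 : ∀ i j, T₁.1 i j = T₂.1 i j) :
    (⟨νp₁, T₁⟩ : Σ νp : {ν : YoungDiagram // P ν}, SB E νp.1) = ⟨νp₂, T₂⟩ := by
  obtain ⟨ν₁, p₁⟩ := νp₁
  obtain ⟨ν₂, p₂⟩ := νp₂
  dsimp at h
  subst h
  obtain ⟨S₁, q₁⟩ := T₁
  obtain ⟨S₂, q₂⟩ := T₂
  have : S₁ = S₂ := SemistandardYoungTableau.ext h2
  subst this
  rfl

lemma sigma_pair_eq {E : ℕ} {P : YoungDiagram × YoungDiagram → Prop} {a b : YoungDiagram}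
    (τ : YoungDiagram) (ha : P (a, τ)) (hb : P (b, τ)) (h : a = b) (T : SB E τ) :
    (⟨⟨(a, τ), ha⟩, T⟩ : Σ qp : {q : YoungDiagram × YoungDiagram // P q}, SB E qp.1.2)
      = ⟨⟨(b, τ), hb⟩, T⟩ := by
  subst h
  rfl

/-- Step 1+2 for Pieri: branch each tableau and flatten. -/
noncomputable def pieriFlatten (E : ℕ) (ν : YoungDiagram) (k : ℕ) :
    PS (E + 1) ν k ≃
      Σ qp : {q : YoungDiagram × YoungDiagram //
        (HStrip q.1 ν ∧ q.1.card = ν.card + k) ∧ HStrip q.1 q.2}, SB E qp.1.2 where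
  toFun x :=
    let y := branchEquiv E x.1.1 x.2
    ⟨⟨(x.1.1, y.1.1), ⟨x.1.2, y.1.2⟩⟩, y.2⟩
  invFun z :=
    ⟨⟨z.1.1.1, z.1.2.1⟩, (branchEquiv E z.1.1.1).symm ⟨⟨z.1.1.2, z.1.2.2⟩, z.2⟩⟩
  left_inv := by
    rintro ⟨⟨μ, hμ⟩, T⟩
    show (⟨⟨μ, hμ⟩, (branchEquiv E μ).symm _⟩ : PS (E+1) ν k) = _
    congr 1
    exact (branchEquiv E μ).left_inv T
  right_inv := by
    rintro ⟨⟨⟨μ, τ⟩, ⟨h1, h2⟩⟩, T⟩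
    have h3 : (branchEquiv E μ) ((branchEquiv E μ).symm ⟨⟨τ, h2⟩, T⟩) = ⟨⟨τ, h2⟩, T⟩ :=
      (branchEquiv E μ).right_inv _
    show (⟨⟨(μ, ((branchEquiv E μ) ((branchEquiv E μ).symm ⟨⟨τ, h2⟩, T⟩)).1.1), _⟩, _⟩ :
      Σ qp : {q : YoungDiagram × YoungDiagram //
        (HStrip q.1 ν ∧ q.1.card = ν.card + k) ∧ HStrip q.1 q.2}, SB E qp.1.2) = _
    rw [h3]


/-- regroup a sigma over a pair subtype, payload depending on the second component -/
def regroupA (E : ℕ) (P : YoungDiagram × YoungDiagram → Prop) :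
    (Σ qp : {q : YoungDiagram × YoungDiagram // P q}, SB E qp.1.2) ≃
      Σ τ : YoungDiagram, ({μ : YoungDiagram // P (μ, τ)} × SB E τ) where
  toFun x := ⟨x.1.1.2, ⟨⟨x.1.1.1, by have := x.1.2; exact this⟩, x.2⟩⟩
  invFun y := ⟨⟨(y.2.1.1, y.1), y.2.1.2⟩, y.2.2⟩
  left_inv := by rintro ⟨⟨⟨μ, τ⟩, h⟩, T⟩; rfl
  right_inv := by rintro ⟨τ, ⟨⟨μ, h⟩, T⟩⟩; rfl

/-- regroup again, splitting the constraints -/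
def regroupB (E : ℕ) (Q : YoungDiagram × YoungDiagram → Prop) (R : YoungDiagram → Prop)
    (S : YoungDiagram → YoungDiagram → Prop) (hQ : ∀ σ τ, Q (σ, τ) ↔ R σ ∧ S σ τ) :
    (Σ qp : {q : YoungDiagram × YoungDiagram // Q q}, SB E qp.1.2) ≃
      Σ σp : {σ : YoungDiagram // R σ}, Σ τp : {τ : YoungDiagram // S σp.1 τ}, SB E τp.1 where
  toFun x := ⟨⟨x.1.1.1, ((hQ _ _).mp (by have := x.1.2; exact this)).1⟩,
    ⟨x.1.1.2, ((hQ _ _).mp (by have := x.1.2; exact this)).2⟩, x.2⟩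
  invFun y := ⟨⟨(y.1.1, y.2.1.1), (hQ _ _).mpr ⟨y.1.2, y.2.1.2⟩⟩, y.2.2⟩
  left_inv := by rintro ⟨⟨⟨σ, τ⟩, h⟩, T⟩; rfl
  right_inv := by rintro ⟨⟨σ, h1⟩, ⟨τ, h2⟩, T⟩; rfl

/-- split by the size of the strip -/
def sizeSplit (E : ℕ) (σ : YoungDiagram) (k : ℕ) :
    (Σ τp : {τ : YoungDiagram // HStrip τ σ ∧ τ.card ≤ σ.card + k}, SB E τp.1) ≃
      Σ m : Fin (k + 1), PS E σ m where
  toFun x := ⟨⟨x.1.1.card - σ.card, by have h1 := x.1.2.1.card_le; have h2 := x.1.2.2; omega⟩,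
    ⟨⟨x.1.1, x.1.2.1, by
      show x.1.1.card = σ.card + (x.1.1.card - σ.card)
      have h1 := x.1.2.1.card_le; omega⟩, x.2⟩⟩
  invFun y := ⟨⟨y.2.1.1, ⟨y.2.1.2.1, by
      have h2 := y.2.1.2.2; have h3 := y.1.isLt; omega⟩⟩, y.2.2⟩
  left_inv := by rintro ⟨⟨τ, ⟨h1, h2⟩⟩, T⟩; rfl
  right_inv := by
    rintro ⟨⟨mv, hmv⟩, ⟨⟨τ, ⟨h1, h2⟩⟩, T⟩⟩
    have hc := h1.card_le
    change τ.card = σ.card + mv at h2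
    have hsub : τ.card - σ.card = mv := by omega
    subst hsub
    rfl

/-- the full chain of equivalences for the Pieri induction step -/
noncomputable def pieriChain (E : ℕ) (ν : YoungDiagram) (k : ℕ) :
    PS (E + 1) ν k ≃
      Σ σp : {σ : YoungDiagram // HStrip ν σ}, Σ m : Fin (k + 1), PS E σp.1 m :=
  (pieriFlatten E ν k).trans <|
    ((regroupA E _).trans <|
      (Equiv.sigmaCongrRight (fun τ =>
        Equiv.prodCongr
          (((Equiv.subtypeEquivRight (fun μ => by
              constructor
              · rintro ⟨⟨h1, h2⟩, h3⟩; exact ⟨h1, h3, h2⟩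
              · rintro ⟨h1, h3, h2⟩; exact ⟨⟨h1, h2⟩, h3⟩)).trans
            ((stripEquiv ν τ (ν.card + k)).trans
              (Equiv.subtypeEquivRight (fun σ => by
                constructor
                · rintro ⟨h1, h2, h3⟩; exact ⟨h1, h2, by omega⟩
                · rintro ⟨h1, h2, h3⟩; exact ⟨h1, h2, by omega⟩)))) :
            {μ : YoungDiagram //
              (HStrip μ ν ∧ μ.card = ν.card + k) ∧ HStrip μ τ} ≃
            {σ : YoungDiagram //
              HStrip ν σ ∧ HStrip τ σ ∧ τ.card ≤ σ.card + k})
          (Equiv.refl _))).trans <|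
        ((regroupA E (fun q => HStrip ν q.1 ∧ HStrip q.2 q.1 ∧ q.2.card ≤ q.1.card + k)).symm.trans <|
          (regroupB E _ (fun σ => HStrip ν σ)
            (fun σ τ => HStrip τ σ ∧ τ.card ≤ σ.card + k)
            (fun σ τ => by constructor
                           · rintro ⟨h1, h2, h3⟩; exact ⟨h1, h2, h3⟩
                           · rintro ⟨h1, h2, h3⟩; exact ⟨h1, h2, h3⟩)).trans <|
            Equiv.sigmaCongrRight (fun σp => sizeSplit E σp.1 k)))

theorem pieri : ∀ (E : ℕ) (ν : YoungDiagram) (k : ℕ),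
    Nat.card (PS E ν k) = N E ν * Nat.multichoose E k := by
  intro E
  induction E with
  | zero =>
    intro ν k
    by_cases h : ν = ⊥ ∧ k = 0
    · obtain ⟨h1, h2⟩ := h
      subst h1; subst h2
      have hu : Unique (PS 0 ⊥ 0) := {
        default := ⟨⟨⊥, ⟨HStrip.refl ⊥, by rw [card_bot]⟩⟩, default⟩
        uniq := by
          rintro ⟨⟨μ, ⟨hs, hc⟩⟩, T⟩
          have hμ : μ = ⊥ := mem_zero_of_sb_zero T
          subst hμ
          have hT : T = default := Unique.eq_default T
          subst hT
          rfl }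
      rw [Nat.card_unique, N_bot, Nat.multichoose_zero_right]
    · have he : IsEmpty (PS 0 ν k) := ⟨by
        rintro ⟨⟨μ, ⟨hs, hc⟩⟩, T⟩
        have hμ : μ = ⊥ := mem_zero_of_sb_zero T
        subst hμ
        have hν : ν = ⊥ := le_bot_iff.mp hs.le
        rw [card_bot, hν, card_bot] at hc
        exact h ⟨hν, by omega⟩⟩
      rw [Nat.card_of_isEmpty]
      by_cases hb : ν = ⊥
      · subst hb
        rw [N_bot]
        cases k with
        | zero => exact absurd ⟨rfl, rfl⟩ h
        | succ k => rw [Nat.multichoose_zero_succ, mul_zero]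
      · rw [N_zero hb, zero_mul]
  | succ E ih =>
    intro ν k
    letI : Fintype {σ : YoungDiagram // HStrip ν σ} := Fintype.ofFinite _
    rw [Nat.card_congr (pieriChain E ν k), natCard_sigma]
    have hbranch : N (E + 1) ν = ∑ σp : {σ : YoungDiagram // HStrip ν σ}, N E σp.1 := by
      show Nat.card (SB (E + 1) ν) = _
      rw [Nat.card_congr (branchEquiv E ν), natCard_sigma]
      rfl
    rw [hbranch, Finset.sum_mul]
    refine Finset.sum_congr rfl fun σp _ => ?_
    rw [natCard_sigma]
    rw [Finset.sum_congr rfl (fun (m : Fin (k+1)) _ => ih σp.1 m)]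
    rw [← Finset.mul_sum]
    congr 1
    rw [Fin.sum_univ_eq_sum_range (fun m => Nat.multichoose E m) (k + 1)]
    exact sum_multichoose E k



/-! ## The main counting recursion -/

noncomputable def ssytPairCount' (D n : ℕ) : ℕ :=
  Nat.card {p : Σ μ : YoungDiagram, SemistandardYoungTableau μ //
    p.1.card = n ∧ ∀ i j : ℕ, (i, j) ∈ p.1 → p.2 i j < D}

/-- pairs of a shape with `n` cells and a bounded tableau on it -/
def SP (D n : ℕ) := Σ lp : {l : YoungDiagram // l.card = n}, SB D lp.1

instance finiteCardEq (n : ℕ) : Finite {l : YoungDiagram // l.card = n} :=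
  finite_yd_subtype _ n (fun _ h => h.le)

instance finiteCardLe (n : ℕ) : Finite {l : YoungDiagram // l.card ≤ n} :=
  finite_yd_subtype _ n (fun _ h => h)

instance finiteSP (D n : ℕ) : Finite (SP D n) := by unfold SP; infer_instance

def countEquiv (D n : ℕ) :
    {p : Σ μ : YoungDiagram, SemistandardYoungTableau μ //
      p.1.card = n ∧ ∀ i j : ℕ, (i, j) ∈ p.1 → p.2 i j < D} ≃ SP D n where
  toFun x := ⟨⟨x.1.1, x.2.1⟩, ⟨x.1.2, x.2.2⟩⟩
  invFun y := ⟨⟨y.1.1, y.2.1⟩, ⟨y.1.2, y.2.2⟩⟩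
  left_inv := by rintro ⟨⟨μ, T⟩, ⟨h1, h2⟩⟩; rfl
  right_inv := by rintro ⟨⟨μ, h1⟩, ⟨T, h2⟩⟩; rfl

lemma count_eq_card_SP (D n : ℕ) : ssytPairCount' D n = Nat.card (SP D n) :=
  Nat.card_congr (countEquiv D n)

/-- generic flattening of branching over a constrained shape -/
noncomputable def branchFlatten (E : ℕ) (P : YoungDiagram → Prop) :
    (Σ lp : {l : YoungDiagram // P l}, SB (E + 1) lp.1) ≃
      Σ qp : {q : YoungDiagram × YoungDiagram // P q.1 ∧ HStrip q.1 q.2}, SB E qp.1.2 where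
  toFun x :=
    let y := branchEquiv E x.1.1 x.2
    ⟨⟨(x.1.1, y.1.1), ⟨x.1.2, y.1.2⟩⟩, y.2⟩
  invFun z :=
    ⟨⟨z.1.1.1, z.1.2.1⟩, (branchEquiv E z.1.1.1).symm ⟨⟨z.1.1.2, z.1.2.2⟩, z.2⟩⟩
  left_inv := by
    rintro ⟨⟨l, hl⟩, T⟩
    show (⟨⟨l, hl⟩, (branchEquiv E l).symm _⟩ : Σ lp : {l : YoungDiagram // P l}, SB (E+1) lp.1) = _
    congr 1
    exact (branchEquiv E l).left_inv T
  right_inv := by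
    rintro ⟨⟨⟨l, τ⟩, ⟨h1, h2⟩⟩, T⟩
    have h3 : (branchEquiv E l) ((branchEquiv E l).symm ⟨⟨τ, h2⟩, T⟩) = ⟨⟨τ, h2⟩, T⟩ :=
      (branchEquiv E l).right_inv _
    show (⟨⟨(l, ((branchEquiv E l) ((branchEquiv E l).symm ⟨⟨τ, h2⟩, T⟩)).1.1), _⟩, _⟩ :
      Σ qp : {q : YoungDiagram × YoungDiagram // P q.1 ∧ HStrip q.1 q.2}, SB E qp.1.2) = _
    rw [h3]

/-- split by size of the inner shape, with the doubled-size constraint -/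
def innerSplit (E : ℕ) (σ : YoungDiagram) (n : ℕ) (hσ : σ.card ≤ n) :
    (Σ τp : {τ : YoungDiagram // HStrip τ σ ∧ τ.card + τ.card ≤ σ.card + n}, SB E τp.1) ≃
      Σ m : Fin ((n - σ.card) / 2 + 1), PS E σ m where
  toFun x := ⟨⟨x.1.1.card - σ.card, by
      have h1 := x.1.2.1.card_le; have h2 := x.1.2.2; omega⟩,
    ⟨⟨x.1.1, x.1.2.1, by
      show x.1.1.card = σ.card + (x.1.1.card - σ.card)
      have h1 := x.1.2.1.card_le; omega⟩, x.2⟩⟩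
  invFun y := ⟨⟨y.2.1.1, ⟨y.2.1.2.1, by
      have h2 := y.2.1.2.2; have h3 := y.1.isLt; omega⟩⟩, y.2.2⟩
  left_inv := by rintro ⟨⟨τ, ⟨h1, h2⟩⟩, T⟩; rfl
  right_inv := by
    rintro ⟨⟨mv, hmv⟩, ⟨⟨τ, ⟨h1, h2⟩⟩, T⟩⟩
    have hc := h1.card_le
    change τ.card = σ.card + mv at h2
    have hsub : τ.card - σ.card = mv := by omega
    subst hsub
    rfl

/-- the full chain of equivalences for the main induction step -/
noncomputable def mainChain (E n : ℕ) :
    SP (E + 1) n ≃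
      Σ σp : {σ : YoungDiagram // σ.card ≤ n},
        Σ m : Fin ((n - σp.1.card) / 2 + 1), PS E σp.1 m :=
  (branchFlatten E (fun l => l.card = n)).trans <|
    ((regroupA E _).trans <|
      (Equiv.sigmaCongrRight (fun τ =>
        Equiv.prodCongr
          (((Equiv.subtypeEquivRight (fun μ => by
              constructor
              · rintro ⟨h1, h2⟩; exact ⟨h2, h2, h1⟩
              · rintro ⟨h2, _, h1⟩; exact ⟨h1, h2⟩)).trans
            ((stripEquiv τ τ n).trans
              (Equiv.subtypeEquivRight (fun σ => by
                constructor
                · rintro ⟨h1, _, h3⟩; exact ⟨h1, h3⟩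
                · rintro ⟨h1, h3⟩; exact ⟨h1, h1, h3⟩)))) :
            {μ : YoungDiagram // μ.card = n ∧ HStrip μ τ} ≃
            {σ : YoungDiagram // HStrip τ σ ∧ τ.card + τ.card ≤ σ.card + n})
          (Equiv.refl _))).trans <|
        ((regroupA E (fun q => HStrip q.2 q.1 ∧ q.2.card + q.2.card ≤ q.1.card + n)).symm.trans <|
          (regroupB E _ (fun σ => σ.card ≤ n)
            (fun σ τ => HStrip τ σ ∧ τ.card + τ.card ≤ σ.card + n)
            (fun σ τ => by
              dsimp only
              constructor
              · rintro ⟨h1, h2⟩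
                have h3 := h1.card_le
                exact ⟨by omega, h1, h2⟩
              · rintro ⟨_, h1, h2⟩; exact ⟨h1, h2⟩)).trans <|
            Equiv.sigmaCongrRight (fun σp => innerSplit E σp.1 n σp.2)))

def groupEquiv (n : ℕ) :
    (Σ j : Fin (n + 1), {σ : YoungDiagram // σ.card = j.val}) ≃
      {σ : YoungDiagram // σ.card ≤ n} where
  toFun x := ⟨x.2.1, by have := x.2.2; have := x.1.isLt; omega⟩
  invFun σp := ⟨⟨σp.1.card, by have := σp.2; omega⟩, ⟨σp.1, rfl⟩⟩
  left_inv := by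
    rintro ⟨⟨j, hj⟩, ⟨σ, hσ⟩⟩
    change σ.card = j at hσ
    subst hσ
    rfl
  right_inv := by rintro ⟨σ, hσ⟩; rfl

/-- the convolution coefficients -/
def w (E r : ℕ) : ℕ := ∑ m ∈ Finset.range (r / 2 + 1), Nat.multichoose E m

lemma count_rec (E n : ℕ) :
    ssytPairCount' (E + 1) n = ∑ j ∈ Finset.range (n + 1), ssytPairCount' E j * w E (n - j) := by
  classical
  letI : Fintype {σ : YoungDiagram // σ.card ≤ n} := Fintype.ofFinite _
  letI : ∀ j : ℕ, Fintype {σ : YoungDiagram // σ.card = j} := fun j => Fintype.ofFinite _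
  rw [count_eq_card_SP, Nat.card_congr (mainChain E n), natCard_sigma]
  have hterm : ∀ σp : {σ : YoungDiagram // σ.card ≤ n},
      Nat.card (Σ m : Fin ((n - σp.1.card) / 2 + 1), PS E σp.1 m)
        = N E σp.1 * w E (n - σp.1.card) := by
    intro σp
    rw [natCard_sigma]
    rw [Finset.sum_congr rfl (fun (m : Fin ((n - σp.1.card) / 2 + 1)) _ => pieri E σp.1 m)]
    rw [← Finset.mul_sum]
    congr 1
    rw [Fin.sum_univ_eq_sum_range (fun m => Nat.multichoose E m) ((n - σp.1.card) / 2 + 1)]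
    rfl
  rw [Finset.sum_congr rfl (fun σp _ => hterm σp)]
  -- group by the cardinality of σ
  rw [← Equiv.sum_comp (groupEquiv n) (fun σp => N E σp.1 * w E (n - σp.1.card))]
  rw [Finset.univ_sigma_univ.symm, Finset.sum_sigma]
  have hee : ∑ a : Fin (n+1), ∑ s : {σ : YoungDiagram // σ.card = (a : ℕ)},
        N E ((groupEquiv n) ⟨a, s⟩).1 * w E (n - (((groupEquiv n) ⟨a, s⟩).1).card)
      = ∑ a : Fin (n+1), ∑ s : {σ : YoungDiagram // σ.card = (a : ℕ)},
        N E s.1 * w E (n - s.1.card) :=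
    Finset.sum_congr rfl fun a _ => Finset.sum_congr rfl fun s _ => rfl
  rw [hee]
  rw [Fin.sum_univ_eq_sum_range
    (fun j => ∑ σq : {σ : YoungDiagram // σ.card = j}, N E σq.1 * w E (n - σq.1.card)) (n+1)]
  refine Finset.sum_congr rfl fun j hj => ?_
  have h1 : ∀ σq : {σ : YoungDiagram // σ.card = j},
      N E σq.1 * w E (n - σq.1.card) = N E σq.1 * w E (n - j) := by
    intro σq
    rw [σq.2]
  rw [Finset.sum_congr rfl (fun σq _ => h1 σq), ← Finset.sum_mul]
  congr 1
  rw [count_eq_card_SP]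
  show _ = Nat.card (Σ lp : {l : YoungDiagram // l.card = j}, SB E lp.1)
  rw [natCard_sigma]
  rfl

lemma count_zero (n : ℕ) : ssytPairCount' 0 n = if n = 0 then 1 else 0 := by
  rw [count_eq_card_SP]
  rcases Nat.eq_zero_or_pos n with h | h
  · subst h
    have hu : Unique (SP 0 0) := {
      default := ⟨⟨⊥, card_bot⟩, default⟩
      uniq := by
        rintro ⟨⟨μ, hμ⟩, T⟩
        have hb : μ = ⊥ := eq_bot_of_card_eq_zero hμ
        subst hb
        have hT : T = default := Unique.eq_default T
        subst hT
        rfl }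
    rw [if_pos rfl, Nat.card_unique]
  · have he : IsEmpty (SP 0 n) := ⟨by
      rintro ⟨⟨μ, hμ⟩, T⟩
      have hb : μ = ⊥ := mem_zero_of_sb_zero T
      subst hb
      rw [card_bot] at hμ
      omega⟩
    rw [if_neg (by omega), Nat.card_of_isEmpty]



/-! ## Power series -/

section Series
open PowerSeries

noncomputable def Ws (E : ℕ) : PowerSeries ℚ := PowerSeries.mk (fun r => (w E r : ℚ))

noncomputable def Gs (E : ℕ) : PowerSeries ℚ :=
  PowerSeries.mk (fun r => if 2 ∣ r then (Nat.multichoose E (r / 2) : ℚ) else 0)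

lemma w_succ (E n : ℕ) :
    w E (n + 1) = w E n + (if 2 ∣ (n + 1) then Nat.multichoose E ((n + 1) / 2) else 0) := by
  by_cases h : 2 ∣ (n + 1)
  · rw [if_pos h]
    have h2 : (n + 1) / 2 = n / 2 + 1 := by omega
    rw [w, w, h2, Finset.sum_range_succ]
  · rw [if_neg h]
    have h2 : (n + 1) / 2 = n / 2 := by omega
    rw [w, w, h2]
    omega

lemma w_zero (E : ℕ) : w E 0 = 1 := by
  rw [w]
  norm_num [Nat.multichoose_zero_right]

lemma one_sub_X_mul_Ws (E : ℕ) : (1 - X : PowerSeries ℚ) * Ws E = Gs E := by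
  ext n
  rw [sub_mul, one_mul, map_sub]
  cases n with
  | zero =>
    rw [coeff_zero_X_mul]
    show (coeff 0) (Ws E) - 0 = (coeff 0) (Gs E)
    rw [Ws, Gs, coeff_mk, coeff_mk, w_zero]
    norm_num [Nat.multichoose_zero_right]
  | succ n =>
    rw [coeff_succ_X_mul]
    rw [Ws, Gs, coeff_mk, coeff_mk, coeff_mk, w_succ E n]
    push_cast
    ring

lemma Gs_zero : Gs 0 = 1 := by
  ext n
  rw [Gs, coeff_mk, PowerSeries.coeff_one]
  rcases n with _ | n
  · norm_num [Nat.multichoose_zero_right]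
  · by_cases h : 2 ∣ (n + 1)
    · rw [if_pos h, if_neg (by omega)]
      have h1 : (n + 1) / 2 = ((n + 1) / 2 - 1) + 1 := by omega
      rw [h1, Nat.multichoose_zero_succ]
      norm_num
    · rw [if_neg h, if_neg (by omega)]

lemma coeff_Gs (E n : ℕ) :
    (PowerSeries.coeff n) (Gs E) = if 2 ∣ n then (Nat.multichoose E (n / 2) : ℚ) else 0 := by
  rw [Gs, coeff_mk]

lemma one_sub_X2_mul_Gs (E : ℕ) : (1 - X ^ 2 : PowerSeries ℚ) * Gs (E + 1) = Gs E := by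
  ext n
  rw [sub_mul, one_mul, map_sub, PowerSeries.coeff_X_pow_mul']
  simp only [coeff_Gs]
  by_cases h2 : 2 ≤ n
  · rw [if_pos h2]
    by_cases hd : 2 ∣ n
    · obtain ⟨l, rfl⟩ := hd
      rw [if_pos (show (2:ℕ) ∣ 2 * l from ⟨l, rfl⟩),
        if_pos (show (2:ℕ) ∣ 2 * l - 2 from ⟨l - 1, by omega⟩),
        if_pos (show (2:ℕ) ∣ 2 * l from ⟨l, rfl⟩)]
      have e1 : 2 * l / 2 = (l - 1) + 1 := by omega
      have e2 : (2 * l - 2) / 2 = l - 1 := by omega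
      rw [e1, e2, Nat.multichoose_succ_succ]
      push_cast
      ring
    · have hd2 : ¬ 2 ∣ (n - 2) := by omega
      rw [if_neg hd, if_neg hd2, if_neg hd]
      ring
  · rw [if_neg h2]
    rcases n with _ | _ | n
    · rw [if_pos (show (2:ℕ) ∣ 0 from ⟨0, rfl⟩), if_pos (show (2:ℕ) ∣ 0 from ⟨0, rfl⟩)]
      norm_num
    · rw [if_neg (by omega), if_neg (by omega)]
      norm_num
    · exact (h2 (by omega)).elim

lemma ne_zero_one_sub_X : (1 - X : PowerSeries ℚ) ≠ 0 := by
  intro h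
  have := congrArg (constantCoeff) h
  simp at this

lemma ne_zero_one_sub_X2 : (1 - X ^ 2 : PowerSeries ℚ) ≠ 0 := by
  intro h
  have := congrArg (constantCoeff) h
  simp at this

lemma cc_one_sub_X : constantCoeff (1 - X : PowerSeries ℚ) ≠ 0 := by simp

lemma cc_one_sub_X2 : constantCoeff (1 - X ^ 2 : PowerSeries ℚ) ≠ 0 := by simp

lemma Ws_eq (E : ℕ) : Ws E = (1 - X : PowerSeries ℚ)⁻¹ * Gs E := by
  apply mul_left_cancel₀ ne_zero_one_sub_X
  rw [one_sub_X_mul_Ws, ← mul_assoc, PowerSeries.mul_inv_cancel _ cc_one_sub_X, one_mul]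

lemma Gs_eq (E : ℕ) : Gs E = ((1 - X ^ 2 : PowerSeries ℚ)⁻¹) ^ E := by
  induction E with
  | zero => rw [Gs_zero, pow_zero]
  | succ E ih =>
    apply mul_left_cancel₀ ne_zero_one_sub_X2
    rw [one_sub_X2_mul_Gs, ih, pow_succ' ((1 - X ^ 2 : PowerSeries ℚ)⁻¹) E, ← mul_assoc,
      PowerSeries.mul_inv_cancel _ cc_one_sub_X2, one_mul]

lemma mk_count_succ (E : ℕ) :
    PowerSeries.mk (fun n => (ssytPairCount' (E + 1) n : ℚ))
      = PowerSeries.mk (fun n => (ssytPairCount' E n : ℚ)) * Ws E := by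
  ext n
  rw [coeff_mk, PowerSeries.coeff_mul, Finset.Nat.sum_antidiagonal_eq_sum_range_succ_mk,
    count_rec E n]
  push_cast
  refine Finset.sum_congr rfl fun j hj => ?_
  rw [Ws, coeff_mk, coeff_mk]

lemma mk_count_zero :
    PowerSeries.mk (fun n => (ssytPairCount' 0 n : ℚ)) = 1 := by
  ext n
  rw [coeff_mk, PowerSeries.coeff_one, count_zero]
  split_ifs <;> norm_num

theorem mk_count_eq (D : ℕ) :
    PowerSeries.mk (fun n => (ssytPairCount' D n : ℚ))
      = ((1 - X : PowerSeries ℚ)⁻¹) ^ D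
        * ((1 - X ^ 2 : PowerSeries ℚ)⁻¹) ^ (D.choose 2) := by
  induction D with
  | zero =>
    rw [mk_count_zero, pow_zero, Nat.choose_eq_zero_of_lt (by omega), pow_zero, one_mul]
  | succ E ih =>
    have hch : (E + 1).choose 2 = E.choose 2 + E := by
      have h := Nat.choose_succ_succ' E 1
      norm_num [Nat.choose_one_right] at h
      omega
    rw [mk_count_succ E, ih, Ws_eq, Gs_eq, hch, pow_succ, pow_add]
    ring

end Series

end SSYTGen


/-- The generating series of pairs (Young diagram with `n` cells, semistandard tableau of that
shape with entries in `{0,…,D-1}`) equals `(1-t)^{-D} (1-t²)^{-D(D-1)/2}` in `ℚ[[t]]`: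
this is the Poincaré series of the parafermionic (and of the plactic) algebra. -/
theorem ssytPairCount_generating_series (D : ℕ) (hD : 1 ≤ D) :
    PowerSeries.mk (fun n => (ssytPairCount D n : ℚ)) =
      ((1 - PowerSeries.X : PowerSeries ℚ)⁻¹) ^ D *
        ((1 - PowerSeries.X ^ 2 : PowerSeries ℚ)⁻¹) ^ (D * (D - 1) / 2) := by
  have h : (fun n => (ssytPairCount D n : ℚ)) = (fun n => (SSYTGen.ssytPairCount' D n : ℚ)) := rfl
  rw [h, SSYTGen.mk_count_eq D, Nat.choose_two_right]
end

section
/- Let D ≥ 1 be an integer and let b_n ∈ ℚ be the coefficient of t^n in the formal power series (1−t)^{−D}·(1−t²)^{−D(D−1)/2} ∈ ℚ[[t]]. Then there exists a real constant C > 0 such that b_n / n^{D(D+1)/2 − 1} converges to C as n → ∞; in particular the parafermionic algebra with D degrees of freedom has polynomial growth with Gelfand–Kirillov dimension D(D+1)/2. -/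
open PowerSeries Filter

/-- The Poincaré series of the parafermionic algebra with `D` degrees of freedom,
`P_B(t) = (1-t)^{-D} (1-t²)^{-D(D-1)/2}`, as a formal power series over `ℚ`. -/
noncomputable def parafermionicPoincareSeries (D : ℕ) : PowerSeries ℚ :=
  ((1 - PowerSeries.X : PowerSeries ℚ)⁻¹) ^ D *
    ((1 - PowerSeries.X ^ 2 : PowerSeries ℚ)⁻¹) ^ (D * (D - 1) / 2)

namespace ParafermionAux

/-- Stolz–Cesàro, zero-limit case. -/
lemma stolz0 (u g : ℕ → ℝ) (hg : ∀ n, g n < g (n + 1))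
    (hg' : Tendsto g atTop atTop)
    (h : Tendsto (fun n => (u (n + 1) - u n) / (g (n + 1) - g n)) atTop (nhds 0)) :
    Tendsto (fun n => u n / g n) atTop (nhds 0) := by
  rw [NormedAddCommGroup.tendsto_nhds_zero] at h ⊢
  intro ε hε
  have hε2 : (0 : ℝ) < ε / 2 := by positivity
  obtain ⟨N, hN⟩ := (h (ε / 2) hε2).exists_forall_of_atTop
  have hdiff : ∀ n, N ≤ n → |u (n + 1) - u n| ≤ ε / 2 * (g (n + 1) - g n) := by
    intro n hn
    have hpos : 0 < g (n + 1) - g n := sub_pos.2 (hg n)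
    have := hN n hn
    rw [Real.norm_eq_abs, abs_div, abs_of_pos hpos, div_lt_iff₀ hpos] at this
    linarith
  have key : ∀ m, |u (N + m) - u N| ≤ ε / 2 * (g (N + m) - g N) := by
    intro m
    induction m with
    | zero => simp
    | succ m ih =>
      have h1 := hdiff (N + m) (Nat.le_add_right _ _)
      calc |u (N + (m + 1)) - u N|
          = |(u (N + m + 1) - u (N + m)) + (u (N + m) - u N)| := by ring_nf
        _ ≤ |u (N + m + 1) - u (N + m)| + |u (N + m) - u N| := abs_add_le _ _
        _ ≤ ε / 2 * (g (N + m + 1) - g (N + m)) + ε / 2 * (g (N + m) - g N) := by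
            exact add_le_add h1 ih
        _ = ε / 2 * (g (N + (m + 1)) - g N) := by ring_nf
  have key' : ∀ n, N ≤ n → |u n - u N| ≤ ε / 2 * (g n - g N) := by
    intro n hn
    have : n = N + (n - N) := by omega
    rw [this]; exact key _
  set A : ℝ := |u N| + ε / 2 * |g N| with hA
  have hA0 : 0 ≤ A := by positivity
  filter_upwards [hg'.eventually_ge_atTop (max 1 (2 * A / ε + 1)),
    eventually_ge_atTop N] with n hgn hnN
  have hg1 : (1 : ℝ) ≤ g n := le_trans (le_max_left _ _) hgn
  have hg2 : 2 * A / ε + 1 ≤ g n := le_trans (le_max_right _ _) hgn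
  have hgpos : 0 < g n := by linarith
  have hub : |u n| ≤ A + ε / 2 * g n := by
    have h1 := key' n hnN
    have h2 : |u n| ≤ |u N| + |u n - u N| := by
      have := abs_add_le (u N) (u n - u N); simpa using this
    have h3 : -(ε / 2 * g N) ≤ ε / 2 * |g N| := by
      have := neg_abs_le (g N)
      nlinarith [abs_nonneg (g N)]
    nlinarith [abs_nonneg (u n - u N)]
  rw [Real.norm_eq_abs, abs_div, abs_of_pos hgpos, div_lt_iff₀ hgpos]
  have hAgn : A < ε / 2 * g n := by
    have : ε / 2 * (2 * A / ε + 1) = A + ε / 2 := by field_simp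
    nlinarith
  nlinarith [abs_nonneg (u n)]

/-- Stolz–Cesàro, `⬝/∞` form. -/
lemma stolz (u g : ℕ → ℝ) (hg : ∀ n, g n < g (n + 1))
    (hg' : Tendsto g atTop atTop) {L : ℝ}
    (h : Tendsto (fun n => (u (n + 1) - u n) / (g (n + 1) - g n)) atTop (nhds L)) :
    Tendsto (fun n => u n / g n) atTop (nhds L) := by
  set v : ℕ → ℝ := fun n => u n - L * g n with hv
  have hv0 : Tendsto (fun n => v n / g n) atTop (nhds 0) := by
    apply stolz0 v g hg hg'
    have heq : ∀ n, (v (n + 1) - v n) / (g (n + 1) - g n)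
        = (u (n + 1) - u n) / (g (n + 1) - g n) - L := by
      intro n
      have hne : g (n + 1) - g n ≠ 0 := ne_of_gt (sub_pos.2 (hg n))
      field_simp [hv]
      ring
    simp only [heq]
    simpa using h.sub_const L
  have := hv0.add_const L
  rw [zero_add] at this
  apply this.congr'
  filter_upwards [hg'.eventually_ge_atTop 1] with n hgn
  have hne : g n ≠ 0 := by positivity
  field_simp [hv]
  simp only [hv]; ring

/-- Difference of `(e+1)`-th powers over `e`-th power. -/
lemma pow_diff_ratio (a : ℕ → ℝ) (c : ℝ) (ha : Tendsto a atTop atTop)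
    (hd : Tendsto (fun n => a (n + 1) - a n) atTop (nhds c)) (e : ℕ) :
    Tendsto (fun n => (a (n + 1) ^ (e + 1) - a n ^ (e + 1)) / a (n + 1) ^ e) atTop
      (nhds (c * (e + 1))) := by
  have ha1 : Tendsto (fun n => a (n + 1)) atTop atTop :=
    ha.comp (tendsto_add_atTop_nat 1)
  have hratio : Tendsto (fun n => a n / a (n + 1)) atTop (nhds 1) := by
    have h0 : Tendsto (fun n => (a (n + 1) - a n) / a (n + 1)) atTop (nhds 0) :=
      hd.div_atTop ha1
    have := (tendsto_const_nhds (x := (1 : ℝ)) (f := atTop)).sub h0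
    rw [sub_zero] at this
    apply this.congr'
    filter_upwards [ha1.eventually_ge_atTop 1] with n hn
    have hne : a (n + 1) ≠ 0 := by positivity
    field_simp
    ring
  have hsum : Tendsto (fun n => ∑ i ∈ Finset.range (e + 1), (a n / a (n + 1)) ^ (e - i))
      atTop (nhds (e + 1)) := by
    have : Tendsto (fun n => ∑ i ∈ Finset.range (e + 1), (a n / a (n + 1)) ^ (e - i))
        atTop (nhds (∑ i ∈ Finset.range (e + 1), (1 : ℝ) ^ (e - i))) := by
      apply tendsto_finset_sum
      intro i _
      exact hratio.pow _
    simpa using this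
  have hmul := hd.mul hsum
  apply hmul.congr'
  filter_upwards [ha1.eventually_ge_atTop 1, ha.eventually_ge_atTop 0] with n hn hn0
  have hx : a (n + 1) ≠ 0 := by positivity
  set x := a (n + 1)
  set y := a n
  have hgeom := geom_sum₂_mul x y (e + 1)
  simp only [Nat.add_sub_cancel] at hgeom
  rw [← hgeom]
  rw [eq_div_iff (pow_ne_zero e hx)]
  rw [Finset.mul_sum, Finset.sum_mul, Finset.sum_mul]
  apply Finset.sum_congr rfl
  intro i hi
  have hie : i ≤ e := by
    simp only [Finset.mem_range] at hi; omega
  have hxe : x ^ e = x ^ (e - i) * x ^ i := by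
    rw [← pow_add]; congr 1; omega
  rw [div_pow, hxe]
  field_simp

/-- If the even and odd subsequences converge to the same limit, so does the sequence. -/
lemma tendsto_even_odd {f : ℕ → ℝ} {L : ℝ}
    (he : Tendsto (fun m => f (2 * m)) atTop (nhds L))
    (ho : Tendsto (fun m => f (2 * m + 1)) atTop (nhds L)) :
    Tendsto f atTop (nhds L) := by
  rw [Metric.tendsto_atTop] at he ho ⊢
  intro ε hε
  obtain ⟨N1, h1⟩ := he ε hε
  obtain ⟨N2, h2⟩ := ho ε hε
  refine ⟨2 * N1 + 2 * N2 + 2, fun n hn => ?_⟩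
  rcases Nat.even_or_odd n with ⟨m, hm⟩ | ⟨m, hm⟩
  · have hn' : n = 2 * m := by omega
    rw [hn']; exact h1 m (by omega)
  · have hn' : n = 2 * m + 1 := by omega
    rw [hn']; exact h2 m (by omega)

lemma tendsto_natCast_pow_atTop (e : ℕ) (he : e ≠ 0) :
    Tendsto (fun n : ℕ => ((n : ℝ)) ^ e) atTop atTop :=
  (tendsto_pow_atTop he).comp tendsto_natCast_atTop_atTop

/-- Partial–sum step: if `s (n+1) - s n = u (n+1)` and `u n / n^e → C`, then
`s n / n^(e+1) → C / (e+1)`. -/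
lemma sum_step (u s : ℕ → ℝ) (e : ℕ) (C : ℝ)
    (hrel : ∀ n, s (n + 1) - s n = u (n + 1))
    (hu : Tendsto (fun n => u n / (n : ℝ) ^ e) atTop (nhds C)) :
    Tendsto (fun n => s n / (n : ℝ) ^ (e + 1)) atTop (nhds (C / (e + 1))) := by
  have hcast : Tendsto (fun n : ℕ => (n : ℝ)) atTop atTop := tendsto_natCast_atTop_atTop
  have hdiffc : Tendsto (fun n : ℕ => ((n + 1 : ℕ) : ℝ) - (n : ℝ)) atTop (nhds 1) := by
    have : (fun n : ℕ => ((n + 1 : ℕ) : ℝ) - (n : ℝ)) = fun _ => (1 : ℝ) := by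
      funext n; push_cast; ring
    rw [this]; exact tendsto_const_nhds
  have hden := pow_diff_ratio (fun n : ℕ => (n : ℝ)) 1 hcast hdiffc e
  have hnum : Tendsto (fun n : ℕ => u (n + 1) / ((n + 1 : ℕ) : ℝ) ^ e) atTop (nhds C) :=
    hu.comp (tendsto_add_atTop_nat 1)
  have hdenne : (1 : ℝ) * (e + 1) ≠ 0 := by positivity
  have hmain := hnum.div hden hdenne
  have hL : C / (1 * ((e : ℝ) + 1)) = C / (e + 1) := by ring_nf
  rw [hL] at hmain
  apply stolz s (fun n => (n : ℝ) ^ (e + 1))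
  · intro n
    apply pow_lt_pow_left₀ _ (by positivity) (by omega)
    push_cast; linarith
  · exact tendsto_natCast_pow_atTop (e + 1) (by omega)
  · apply hmain.congr'
    filter_upwards [] with n
    have hxne : ((n + 1 : ℕ) : ℝ) ^ e ≠ 0 := by positivity
    simp only [Pi.div_apply]
    rw [hrel n, div_div_div_cancel_right₀ hxne]

/-- Parity–sum step: if `t (n+2) - t n = u (n+2)` and `u n / n^e → C`, then
`t n / n^(e+1) → C / (2(e+1))`. -/
lemma parity_step (u t : ℕ → ℝ) (e : ℕ) (C : ℝ)
    (hrel : ∀ n, t (n + 2) - t n = u (n + 2))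
    (hu : Tendsto (fun n => u n / (n : ℝ) ^ e) atTop (nhds C)) :
    Tendsto (fun n => t n / (n : ℝ) ^ (e + 1)) atTop (nhds (C / (2 * (e + 1)))) := by
  have hL : C / (2 * ((e : ℝ) + 1)) = C / (2 * (e + 1)) := by norm_num
  have gen : ∀ r : ℕ, r = 0 ∨ r = 1 →
      Tendsto (fun m => t (2 * m + r) / ((2 * m + r : ℕ) : ℝ) ^ (e + 1)) atTop
        (nhds (C / (2 * (e + 1)))) := by
    intro r hr
    have hcast : Tendsto (fun m : ℕ => ((2 * m + r : ℕ) : ℝ)) atTop atTop := by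
      apply tendsto_natCast_atTop_atTop.comp
      apply tendsto_atTop_atTop.2
      intro b; exact ⟨b, fun m hm => by omega⟩
    have hdiffc : Tendsto (fun m : ℕ => ((2 * (m + 1) + r : ℕ) : ℝ) - ((2 * m + r : ℕ) : ℝ))
        atTop (nhds 2) := by
      have : (fun m : ℕ => ((2 * (m + 1) + r : ℕ) : ℝ) - ((2 * m + r : ℕ) : ℝ))
          = fun _ => (2 : ℝ) := by
        funext m; push_cast; ring
      rw [this]; exact tendsto_const_nhds
    have hden := pow_diff_ratio (fun m : ℕ => ((2 * m + r : ℕ) : ℝ)) 2 hcast hdiffc e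
    have hnum : Tendsto (fun m : ℕ => u (2 * (m + 1) + r) / ((2 * (m + 1) + r : ℕ) : ℝ) ^ e)
        atTop (nhds C) := by
      apply hu.comp
      apply tendsto_atTop_atTop.2
      intro b; exact ⟨b, fun m hm => by omega⟩
    have hdenne : (2 : ℝ) * (e + 1) ≠ 0 := by positivity
    have hmain := hnum.div hden hdenne
    rw [hL] at hmain
    apply stolz (fun m => t (2 * m + r)) (fun m => ((2 * m + r : ℕ) : ℝ) ^ (e + 1))
    · intro m
      apply pow_lt_pow_left₀ _ (by positivity) (by omega)
      push_cast; linarith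
    · apply (tendsto_pow_atTop (n := e + 1) (by omega)).comp hcast
    · apply hmain.congr'
      filter_upwards [] with m
      have hxne : ((2 * (m + 1) + r : ℕ) : ℝ) ^ e ≠ 0 := by positivity
      have hr2 : t (2 * (m + 1) + r) - t (2 * m + r) = u (2 * (m + 1) + r) := by
        have := hrel (2 * m + r)
        have h1 : 2 * (m + 1) + r = (2 * m + r) + 2 := by omega
        rw [h1]; exact this
      simp only [Pi.div_apply]
      rw [hr2, div_div_div_cancel_right₀ hxne]
  apply tendsto_even_odd (L := C / (2 * (e + 1)))
  · have := gen 0 (Or.inl rfl); simpa using this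
  · have := gen 1 (Or.inr rfl); simpa using this

/-! ### Power series part -/

noncomputable def F (a b : ℕ) : PowerSeries ℚ :=
  ((1 - PowerSeries.X : PowerSeries ℚ)⁻¹) ^ a *
    ((1 - PowerSeries.X ^ 2 : PowerSeries ℚ)⁻¹) ^ b

lemma const1 : constantCoeff (1 - PowerSeries.X : PowerSeries ℚ) ≠ 0 := by
  simp

lemma const2 : constantCoeff (1 - PowerSeries.X ^ 2 : PowerSeries ℚ) ≠ 0 := by
  simp

lemma hunit1 : (1 - PowerSeries.X : PowerSeries ℚ) * (1 - PowerSeries.X)⁻¹ = 1 :=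
  PowerSeries.mul_inv_cancel _ const1

lemma hunit2 : (1 - PowerSeries.X ^ 2 : PowerSeries ℚ) * (1 - PowerSeries.X ^ 2)⁻¹ = 1 :=
  PowerSeries.mul_inv_cancel _ const2

lemma F_succ_a (a b : ℕ) : (1 - PowerSeries.X) * F (a + 1) b = F a b := by
  have h : (1 - PowerSeries.X : PowerSeries ℚ) *
      (((1 - PowerSeries.X : PowerSeries ℚ)⁻¹) ^ (a + 1) *
        ((1 - PowerSeries.X ^ 2 : PowerSeries ℚ)⁻¹) ^ b)
      = ((1 - PowerSeries.X) * (1 - PowerSeries.X)⁻¹) *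
        (((1 - PowerSeries.X : PowerSeries ℚ)⁻¹) ^ a *
          ((1 - PowerSeries.X ^ 2 : PowerSeries ℚ)⁻¹) ^ b) := by
    ring
  rw [F, F, h, hunit1, one_mul]

lemma F_succ_b (a b : ℕ) : (1 - PowerSeries.X ^ 2) * F a (b + 1) = F a b := by
  have h : (1 - PowerSeries.X ^ 2 : PowerSeries ℚ) *
      (((1 - PowerSeries.X : PowerSeries ℚ)⁻¹) ^ a *
        ((1 - PowerSeries.X ^ 2 : PowerSeries ℚ)⁻¹) ^ (b + 1))
      = ((1 - PowerSeries.X ^ 2) * (1 - PowerSeries.X ^ 2)⁻¹) *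
        (((1 - PowerSeries.X : PowerSeries ℚ)⁻¹) ^ a *
          ((1 - PowerSeries.X ^ 2 : PowerSeries ℚ)⁻¹) ^ b) := by
    ring
  rw [F, F, h, hunit2, one_mul]

lemma coeff_rec_a (a b n : ℕ) :
    coeff (n + 1) (F (a + 1) b) - coeff n (F (a + 1) b) = coeff (n + 1) (F a b) := by
  have h := congrArg (coeff (n + 1)) (F_succ_a a b)
  rwa [sub_mul, one_mul, map_sub, coeff_succ_X_mul] at h

lemma coeff_rec_b (a b n : ℕ) :
    coeff (n + 2) (F a (b + 1)) - coeff n (F a (b + 1)) = coeff (n + 2) (F a b) := by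
  have h := congrArg (coeff (n + 2)) (F_succ_b a b)
  rwa [sub_mul, one_mul, map_sub, PowerSeries.coeff_X_pow_mul _ 2 n] at h

lemma coeff_base (n : ℕ) : coeff n (F 1 0) = 1 := by
  have hF : F 1 0 = (1 - PowerSeries.X : PowerSeries ℚ)⁻¹ := by
    rw [F, pow_one, pow_zero, mul_one]
  have hinv : (PowerSeries.mk fun _ => (1 : ℚ)) = (1 - PowerSeries.X : PowerSeries ℚ)⁻¹ := by
    rw [PowerSeries.eq_inv_iff_mul_eq_one const1]
    ext d
    rw [mul_sub, mul_one, map_sub, ← pow_one (PowerSeries.X : PowerSeries ℚ),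
      PowerSeries.coeff_mul_X_pow' _ 1 d]
    cases d with
    | zero => simp
    | succ d => simp [PowerSeries.coeff_one]
  rw [hF, ← hinv, PowerSeries.coeff_mk]

lemma main (b : ℕ) : ∀ a : ℕ, 1 ≤ a → ∃ C : ℝ, 0 < C ∧
    Tendsto (fun n : ℕ => ((coeff n (F a b) : ℚ) : ℝ) / (n : ℝ) ^ (a + b - 1))
      atTop (nhds C) := by
  induction b with
  | zero =>
    intro a ha
    induction a with
    | zero => omega
    | succ a iha =>
      rcases Nat.eq_zero_or_pos a with rfl | hapos
      · refine ⟨1, one_pos, ?_⟩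
        have : (fun n : ℕ => ((coeff n (F 1 0) : ℚ) : ℝ) / (n : ℝ) ^ (1 + 0 - 1))
            = fun _ => (1 : ℝ) := by
          funext n; rw [coeff_base]; norm_num
        rw [this]; exact tendsto_const_nhds
      · obtain ⟨C, hC, h⟩ := iha hapos
        set e := a + 0 - 1 with he
        have hee : e + 1 = a + 1 + 0 - 1 := by omega
        refine ⟨C / (e + 1), by positivity, ?_⟩
        rw [← hee]
        apply sum_step (fun n => ((coeff n (F a 0) : ℚ) : ℝ))
          (fun n => ((coeff n (F (a + 1) 0) : ℚ) : ℝ)) e C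
        · intro n
          have := coeff_rec_a a 0 n
          push_cast [← this]
          ring
        · exact h
  | succ b ihb =>
    intro a ha
    obtain ⟨C, hC, h⟩ := ihb a ha
    set e := a + b - 1 with he
    have hee : e + 1 = a + (b + 1) - 1 := by omega
    refine ⟨C / (2 * (e + 1)), by positivity, ?_⟩
    rw [← hee]
    apply parity_step (fun n => ((coeff n (F a b) : ℚ) : ℝ))
      (fun n => ((coeff n (F a (b + 1)) : ℚ) : ℝ)) e C
    · intro n
      have := coeff_rec_b a b n
      push_cast [← this]
      ring
    · exact h

end ParafermionAux

/-- If `b_n` is the coefficient of `tⁿ` in `(1-t)^{-D} (1-t²)^{-D(D-1)/2}`, then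
`b_n / n^{D(D+1)/2 - 1}` converges to a positive constant `C` as `n → ∞`: the parafermionic
algebra has polynomial growth, with Gelfand–Kirillov dimension `D(D+1)/2`. -/
theorem parafermionic_polynomial_growth (D : ℕ) (hD : 1 ≤ D) :
    ∃ C : ℝ, 0 < C ∧
      Tendsto
        (fun n : ℕ =>
          ((PowerSeries.coeff n (parafermionicPoincareSeries D) : ℚ) : ℝ) /
            (n : ℝ) ^ (D * (D + 1) / 2 - 1))
        atTop (nhds C) := by
  obtain ⟨C, hC, h⟩ := ParafermionAux.main (D * (D - 1) / 2) D hD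
  refine ⟨C, hC, ?_⟩
  have hFeq : parafermionicPoincareSeries D = ParafermionAux.F D (D * (D - 1) / 2) := rfl
  have hexp : D * (D + 1) / 2 - 1 = D + D * (D - 1) / 2 - 1 := by
    obtain ⟨d, rfl⟩ : ∃ d, D = d + 1 := ⟨D - 1, by omega⟩
    have h1 : (d + 1) * (d + 1 + 1) = 2 * (d + 1) + (d + 1) * d := by ring
    have h2 : (d + 1) * (d + 1 - 1) = (d + 1) * d := by
      congr 1
    obtain ⟨k, hk⟩ : ∃ k, (d + 1) * d = k + k := by
      have : Even ((d + 1) * d) := by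
        rcases Nat.even_or_odd d with hd | hd
        · exact hd.mul_left _
        · exact (hd.add_one).mul_right _
      exact this
    rw [h2]
    omega
  rw [hFeq, hexp]
  exact h
end
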